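/- Suppose a complex polynomial P of degree n with P(0) = c_0, leading coefficient c_n, and roots on ℂ satisfies the Erdős–Turán-type discrepancy bound: for all 0 ≤ α < β ≤ 2π, |N(α,β)/n − (β−α)/(2π)| ≤ √(2·B_∞(P)/n), where N(α,β) counts roots with argument in [α,β) and B_∞(P) = log(‖P‖_∞/√|c_0 c_n|). Fix θ ∈ [1/2, 1], set δ_n = (πa/√n)·(2B_∞(P))^θ for a real a > 1 and assume δ_n ≤ π. Then for any φ, the sector {z : φ − δ_n ≤ arg z < φ + δ_n} contains at least (a − 1)·√n·(2B_∞(P))^θ roots of P. -/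

import Mathlib

open scoped Classical

/-- The argument of a complex number normalized to lie in `[0, 2π)`. -/
noncomputable def arg2pi (z : ℂ) : ℝ :=
  if Complex.arg z < 0 then Complex.arg z + 2 * Real.pi else Complex.arg z

lemma arg2pi_nonneg (z : ℂ) : 0 ≤ arg2pi z := by
  unfold arg2pi
  split
  · nlinarith [Complex.neg_pi_lt_arg z, Real.pi_pos]
  · linarith [not_lt.mp (by assumption)]

lemma arg2pi_lt (z : ℂ) : arg2pi z < 2 * Real.pi := by
  unfold arg2pi
  split
  · nlinarith [Real.pi_pos, (by assumption : Complex.arg z < 0)]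
  · nlinarith [Complex.arg_le_pi z, Real.pi_pos]

lemma pow_eq_one_aux {x : ℝ} (n : ℕ) (hn : n ≠ 0) (hx : 0 ≤ x) (h : x ^ n = 1) : x = 1 := by
  refine le_antisymm ?_ ?_
  · by_contra h'; push_neg at h'
    exact absurd h (ne_of_gt (one_lt_pow₀ h' hn))
  · by_contra h'; push_neg at h'
    exact absurd h (ne_of_lt (pow_lt_one₀ hx h' hn))

lemma visser (P : Polynomial ℂ) (n : ℕ) (hn : 0 < n) (hdeg : P.natDegree = n)
    (hc0 : P.coeff 0 ≠ 0) (hcn : P.leadingCoeff ≠ 0) :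
    ∃ z : ℂ, ‖z‖ = 1 ∧
      ‖P.coeff 0‖ + ‖P.leadingCoeff‖ ≤ ‖P.eval z‖ := by
  set c0 := P.coeff 0 with hc0def
  set cn := P.leadingCoeff with hcndef
  have habs0 : (0:ℝ) < ‖c0‖ := by simpa using hc0
  have habsn : (0:ℝ) < ‖cn‖ := by simpa using hcn
  set u : ℂ := c0 / (‖c0‖ : ℂ) with hu
  set w : ℂ := u * ((‖cn‖ : ℂ) / cn) with hw
  have hcabs0 : ‖((‖c0‖ : ℂ))‖ = ‖c0‖ := by
    rw [Complex.norm_real, Real.norm_eq_abs, abs_of_pos habs0]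
  have hcabsn : ‖((‖cn‖ : ℂ))‖ = ‖cn‖ := by
    rw [Complex.norm_real, Real.norm_eq_abs, abs_of_pos habsn]
  have huabs : ‖u‖ = 1 := by
    rw [hu, norm_div, hcabs0, div_self habs0.ne']
  have hwabs : ‖w‖ = 1 := by
    rw [hw, norm_mul, huabs, one_mul, norm_div, hcabsn, div_self habsn.ne']
  have hwne : w ≠ 0 := by
    intro h; rw [h] at hwabs; simp at hwabs
  have hkey : c0 + cn * w = ((‖c0‖ + ‖cn‖ : ℝ) : ℂ) * u := by
    have h1 : ((‖c0‖ : ℂ)) ≠ 0 := by simpa using habs0.ne'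
    rw [hw, hu]
    field_simp
    push_cast
    ring
  have habskey : ‖c0 + cn * w‖ = ‖c0‖ + ‖cn‖ := by
    rw [hkey, norm_mul, huabs, mul_one, Complex.norm_real, Real.norm_eq_abs, abs_of_pos (by positivity)]
  set ζ : ℂ := w ^ ((n:ℂ))⁻¹ with hζ
  have hζn : ζ ^ n = w := Complex.cpow_nat_inv_pow w hn.ne'
  have hζabs : ‖ζ‖ = 1 := by
    refine pow_eq_one_aux n hn.ne' (norm_nonneg ζ) ?_
    rw [← norm_pow, hζn, hwabs]
  set ω : ℂ := Complex.exp (2 * Real.pi * Complex.I / n) with hω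
  have hprim : IsPrimitiveRoot ω n := Complex.isPrimitiveRoot_exp n hn.ne'
  have hωabs : ‖ω‖ = 1 := by
    rw [hω, Complex.norm_exp]
    norm_num [Complex.div_re, Complex.mul_re, Complex.mul_im]
  have hsum : ∑ j ∈ Finset.range n, P.eval (ζ * ω ^ j) = n * (c0 + cn * w) := by
    have hev : ∀ x : ℂ, P.eval x = ∑ k ∈ Finset.range (n+1), P.coeff k * x ^ k := by
      intro x; rw [← hdeg]; exact Polynomial.eval_eq_sum_range x
    calc ∑ j ∈ Finset.range n, P.eval (ζ * ω ^ j)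
        = ∑ j ∈ Finset.range n, ∑ k ∈ Finset.range (n+1),
            P.coeff k * ζ ^ k * (ω ^ k) ^ j := by
          refine Finset.sum_congr rfl fun j _ => ?_
          rw [hev]
          refine Finset.sum_congr rfl fun k _ => ?_
          rw [mul_pow, ← pow_mul, mul_comm j k, pow_mul, mul_assoc]
      _ = ∑ k ∈ Finset.range (n+1), P.coeff k * ζ ^ k * ∑ j ∈ Finset.range n, (ω ^ k) ^ j := by
          rw [Finset.sum_comm]
          exact Finset.sum_congr rfl fun k _ => by rw [Finset.mul_sum]
      _ = ∑ k ∈ Finset.range (n+1), P.coeff k * ζ ^ k * (if n ∣ k then (n:ℂ) else 0) := by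
          refine Finset.sum_congr rfl fun k _ => ?_
          congr 1
          by_cases hdvd : n ∣ k
          · rw [if_pos hdvd]
            have : ω ^ k = 1 := (hprim.pow_eq_one_iff_dvd k).mpr hdvd
            simp [this]
          · rw [if_neg hdvd]
            have hne1 : ω ^ k ≠ 1 := fun h => hdvd ((hprim.pow_eq_one_iff_dvd k).mp h)
            rw [geom_sum_eq hne1]
            have : (ω ^ k) ^ n = 1 := by
              rw [← pow_mul, mul_comm, pow_mul, hprim.pow_eq_one, one_pow]
            rw [this]
            simp
      _ = n * (c0 + cn * w) := by
          rw [Finset.sum_range_succ]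
          have hcoefn : P.coeff n = cn := by rw [hcndef, Polynomial.leadingCoeff, hdeg]
          have hfirst : ∑ k ∈ Finset.range n, (P.coeff k * ζ ^ k * if n ∣ k then (n:ℂ) else 0)
              = c0 * n := by
            rw [Finset.sum_eq_single_of_mem 0 (Finset.mem_range.mpr hn)]
            · simp [hc0def]
            · intro k hk hk0
              rw [if_neg, mul_zero]
              intro hdvd
              exact hk0 (Nat.eq_zero_of_dvd_of_lt hdvd (Finset.mem_range.mp hk))
          rw [hfirst, hcoefn, hζn, if_pos dvd_rfl]
          ring
  have hnon : (Finset.range n).Nonempty := ⟨0, Finset.mem_range.mpr hn⟩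
  have hbig : ∑ _j ∈ Finset.range n, (‖c0‖ + ‖cn‖)
      ≤ ∑ j ∈ Finset.range n, ‖P.eval (ζ * ω ^ j)‖ := by
    calc ∑ _j ∈ Finset.range n, (‖c0‖ + ‖cn‖)
        = ‖(n:ℂ) * (c0 + cn * w)‖ := by
          rw [norm_mul, habskey, Complex.norm_natCast, Finset.sum_const,
            Finset.card_range, nsmul_eq_mul]
      _ = ‖∑ j ∈ Finset.range n, P.eval (ζ * ω ^ j)‖ := by rw [hsum]
      _ ≤ ∑ j ∈ Finset.range n, ‖P.eval (ζ * ω ^ j)‖ :=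
          norm_sum_le _ _
  obtain ⟨j, _, hj⟩ := Finset.exists_le_of_sum_le hnon hbig
  exact ⟨ζ * ω ^ j, by rw [norm_mul, hζabs, norm_pow, hωabs, one_pow, mul_one], hj⟩

set_option maxHeartbeats 1000000 in
theorem stmt11 (P : Polynomial ℂ) (n : ℕ) (hn : 0 < n) (hdeg : P.natDegree = n)
    (h0 : P.eval 0 ≠ 0)
    (B : ℝ)
    (hB : B = Real.log ((⨆ z : Metric.sphere (0:ℂ) 1, ‖P.eval (z : ℂ)‖) /
      Real.sqrt (‖P.coeff 0 * P.leadingCoeff‖)))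
    (hdisc : ∀ α β : ℝ, 0 ≤ α → α < β → β ≤ 2 * Real.pi →
      |((P.roots.filter (fun z => α ≤ arg2pi z ∧ arg2pi z < β)).card : ℝ) / n
        - (β - α) / (2 * Real.pi)| ≤ Real.sqrt (2 * B / n))
    (θ a δn : ℝ) (hθ : θ ∈ Set.Icc (1/2 : ℝ) 1) (ha : 1 < a)
    (hδn : δn = (Real.pi * a / Real.sqrt n) * (2 * B) ^ θ)
    (hδle : δn ≤ Real.pi) :
    ∀ φ : ℝ,
      (a - 1) * Real.sqrt n * (2 * B) ^ θ ≤
        ((P.roots.filter (fun z => ∃ k : ℤ,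
          φ - δn ≤ arg2pi z + 2 * Real.pi * k ∧
          arg2pi z + 2 * Real.pi * k < φ + δn)).card : ℝ) := by
  intro φ
  have hπ := Real.pi_pos
  set t : ℝ := 2 * B with ht
  have hPne : P ≠ 0 := fun h => h0 (by simp [h])
  have hc0 : P.coeff 0 ≠ 0 := by
    rwa [Polynomial.coeff_zero_eq_eval_zero]
  have hcn : P.leadingCoeff ≠ 0 := Polynomial.leadingCoeff_ne_zero.mpr hPne
  have hcard : Multiset.card P.roots = n := by
    rw [← hdeg]
    exact Polynomial.splits_iff_card_roots.mp (IsAlgClosed.splits P)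
  have hnR : (0:ℝ) < n := Nat.cast_pos.mpr hn
  set s : ℝ := Real.sqrt n with hs
  have hspos : 0 < s := Real.sqrt_pos.mpr hnR
  have hss : s * s = n := Real.mul_self_sqrt hnR.le
  -- t ≥ 1 via Visser's inequality
  have ht1 : (1:ℝ) ≤ t := by
    obtain ⟨z, hz1, hzge⟩ := visser P n hn hdeg hc0 hcn
    set S : ℝ := ⨆ z : Metric.sphere (0:ℂ) 1, ‖P.eval (z : ℂ)‖ with hSdef
    have hbdd : BddAbove (Set.range fun z : Metric.sphere (0:ℂ) 1 =>
        ‖P.eval (z : ℂ)‖) := by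
      have heq : (fun z : Metric.sphere (0:ℂ) 1 => ‖P.eval (z : ℂ)‖)
          = (fun z : ℂ => ‖P.eval z‖) ∘ (Subtype.val) := rfl
      rw [heq, Set.range_comp, Subtype.range_coe]
      exact (isCompact_sphere (0:ℂ) 1).bddAbove_image
        ((continuous_norm.comp (P.continuous_aeval)).continuousOn)
    have hzmem : z ∈ Metric.sphere (0:ℂ) 1 := by
      rw [mem_sphere_iff_norm, sub_zero]; exact hz1
    have hSz : ‖P.eval z‖ ≤ S :=
      le_ciSup hbdd (⟨z, hzmem⟩ : Metric.sphere (0:ℂ) 1)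
    set D : ℝ := ‖P.coeff 0 * P.leadingCoeff‖ with hD
    have hDpos : 0 < D := norm_pos_iff.mpr (mul_ne_zero hc0 hcn)
    have hDsq : Real.sqrt D * Real.sqrt D = D := Real.mul_self_sqrt hDpos.le
    have hAM : 2 * Real.sqrt D ≤ ‖P.coeff 0‖ + ‖P.leadingCoeff‖ := by
      have h1 : Real.sqrt D = Real.sqrt (‖P.coeff 0‖) *
          Real.sqrt (‖P.leadingCoeff‖) := by
        rw [hD, norm_mul, Real.sqrt_mul (by positivity)]
      nlinarith [Real.sq_sqrt (norm_nonneg (P.coeff 0)),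
        Real.sq_sqrt (norm_nonneg P.leadingCoeff),
        sq_nonneg (Real.sqrt (‖P.coeff 0‖) - Real.sqrt (‖P.leadingCoeff‖))]
    have hSD : 2 * Real.sqrt D ≤ S := le_trans hAM (le_trans hzge hSz)
    have hsqrtDpos : 0 < Real.sqrt D := Real.sqrt_pos.mpr hDpos
    have hlog : Real.log 2 ≤ B := by
      rw [hB]
      have h2 : (2:ℝ) ≤ S / Real.sqrt D := by
        rw [le_div_iff₀ hsqrtDpos]; linarith
      calc Real.log 2 ≤ Real.log (S / Real.sqrt D) :=
            Real.log_le_log (by norm_num) h2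
        _ = _ := rfl
    have := Real.log_two_gt_d9
    rw [ht]
    linarith
  have ht0 : (0:ℝ) ≤ t := by linarith
  set r : ℝ := t ^ θ with hr
  have hrpos : 0 < r := Real.rpow_pos_of_pos (by linarith) θ
  have hsr : Real.sqrt t ≤ r := by
    rw [Real.sqrt_eq_rpow, hr]
    exact Real.rpow_le_rpow_of_exponent_le ht1 hθ.1
  have hδpos : 0 < δn := by
    rw [hδn]
    exact mul_pos (div_pos (mul_pos hπ (by linarith)) hspos) hrpos
  have hErr : Real.sqrt (t/(n:ℝ)) * n = Real.sqrt t * s := by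
    have h1 : Real.sqrt ((t:ℝ)/n) = Real.sqrt t / s := by
      rw [Real.sqrt_div ht0, hs]
    rw [h1, ← hss]
    field_simp
  have hmain : (n:ℝ) * (2*δn/(2*Real.pi)) = a * (s * r) := by
    rw [hδn, ← hss]
    field_simp
  -- set up ψ
  set x0 : ℝ := (φ - δn) / (2*Real.pi) with hx0
  set ψ : ℝ := 2*Real.pi * Int.fract x0 with hψdef
  have hψ0 : 0 ≤ ψ := mul_nonneg (by linarith) (Int.fract_nonneg _)
  have hψlt : ψ < 2*Real.pi := by
    have := Int.fract_lt_one x0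
    nlinarith
  have hsplit : φ - δn = ψ + 2*Real.pi*(⌊x0⌋:ℤ) := by
    have h1 : φ - δn = 2*Real.pi*x0 := by
      rw [hx0]; field_simp
    rw [hψdef, Int.fract]
    push_cast
    rw [h1]
    ring
  -- condition equivalence
  have hcond : ∀ z : ℂ, ((∃ k : ℤ,
      φ - δn ≤ arg2pi z + 2 * Real.pi * k ∧
      arg2pi z + 2 * Real.pi * k < φ + δn) ↔
      ((ψ ≤ arg2pi z ∧ arg2pi z < ψ + 2*δn) ∨ arg2pi z + 2*Real.pi < ψ + 2*δn)) := by
    intro z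
    have hy0 := arg2pi_nonneg z
    have hy2 := arg2pi_lt z
    set y := arg2pi z with hy
    constructor
    · rintro ⟨k, h1, h2⟩
      obtain ⟨j, rfl⟩ : ∃ j : ℤ, k = j + ⌊x0⌋ := ⟨k - ⌊x0⌋, by ring⟩
      have hc1 : ψ ≤ y + 2*Real.pi*(j:ℝ) := by
        push_cast at h1
        linarith [hsplit]
      have hc2 : y + 2*Real.pi*(j:ℝ) < ψ + 2*δn := by
        push_cast at h2
        linarith [hsplit]
      have hj0 : (0:ℤ) ≤ j := by
        by_contra hcon
        push_neg at hcon
        have hjr : (j:ℝ) ≤ -1 := by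
          have : j ≤ -1 := by omega
          exact_mod_cast this
        have hmul : 2*Real.pi*(j:ℝ) ≤ 2*Real.pi*(-1) :=
          mul_le_mul_of_nonneg_left hjr (by linarith)
        linarith
      have hj1 : j ≤ 1 := by
        by_contra hcon
        push_neg at hcon
        have hjr : (2:ℝ) ≤ (j:ℝ) := by exact_mod_cast hcon
        have hmul : 2*Real.pi*2 ≤ 2*Real.pi*(j:ℝ) :=
          mul_le_mul_of_nonneg_left hjr (by linarith)
        linarith
      rcases (by omega : j = 0 ∨ j = 1) with rfl | rfl
      · push_cast at hc1 hc2
        exact Or.inl ⟨by linarith, by linarith⟩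
      · push_cast at hc2
        exact Or.inr (by linarith)
    · rintro (⟨h1, h2⟩ | h)
      · refine ⟨⌊x0⌋, ?_, ?_⟩ <;> push_cast <;> linarith [hsplit]
      · refine ⟨⌊x0⌋ + 1, ?_, ?_⟩ <;> push_cast <;> linarith [hsplit]
  by_cases hA : ψ + 2*δn ≤ 2*Real.pi
  · -- Case A : no wrap
    have hfe : P.roots.filter (fun z => ∃ k : ℤ,
        φ - δn ≤ arg2pi z + 2 * Real.pi * k ∧
        arg2pi z + 2 * Real.pi * k < φ + δn)
        = P.roots.filter (fun z => ψ ≤ arg2pi z ∧ arg2pi z < ψ + 2*δn) := by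
      refine Multiset.filter_congr fun z _ => ?_
      rw [hcond z]
      constructor
      · rintro (h | h)
        · exact h
        · exfalso; linarith [arg2pi_nonneg z]
      · exact fun h => Or.inl h
    rw [hfe]
    have hd := hdisc ψ (ψ + 2*δn) hψ0 (by linarith) hA
    rw [abs_le] at hd
    obtain ⟨hlo, -⟩ := hd
    have hba : ψ + 2*δn - ψ = 2*δn := by ring
    rw [hba] at hlo
    set c : ℕ := (P.roots.filter (fun z => ψ ≤ arg2pi z ∧ arg2pi z < ψ + 2*δn)).card with hc
    have hx := mul_le_mul_of_nonneg_left hlo hnR.le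
    have h3 : (n:ℝ) * ((c:ℝ)/n) = c := by field_simp
    rw [mul_sub, h3] at hx
    have hfin : Real.sqrt t * s ≤ r * s := mul_le_mul_of_nonneg_right hsr hspos.le
    linarith [hErr, hmain, hx, hfin]
  · push_neg at hA
    set γ : ℝ := ψ + 2*δn - 2*Real.pi with hγ
    have hγ0 : 0 < γ := by rw [hγ]; linarith
    by_cases hB2 : γ < ψ
    · -- Case B : wrap, use complement
      have hfe : P.roots.filter (fun z => ∃ k : ℤ,
          φ - δn ≤ arg2pi z + 2 * Real.pi * k ∧
          arg2pi z + 2 * Real.pi * k < φ + δn)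
          = P.roots.filter (fun z => ¬(γ ≤ arg2pi z ∧ arg2pi z < ψ)) := by
        refine Multiset.filter_congr fun z _ => ?_
        rw [hcond z]
        have hy0 := arg2pi_nonneg z
        have hy2 := arg2pi_lt z
        constructor
        · rintro (⟨h1, h2⟩ | h) ⟨g1, g2⟩
          · linarith
          · linarith
        · intro h
          by_cases hyψ : ψ ≤ arg2pi z
          · exact Or.inl ⟨hyψ, by linarith⟩
          · push_neg at hyψ
            by_cases hyγ : γ ≤ arg2pi z
            · exact absurd ⟨hyγ, hyψ⟩ h
            · push_neg at hyγ
              exact Or.inr (by linarith)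
      rw [hfe]
      have hpart := congrArg Multiset.card
        (Multiset.filter_add_not (fun z => γ ≤ arg2pi z ∧ arg2pi z < ψ) P.roots)
      rw [Multiset.card_add, hcard] at hpart
      have hd := hdisc γ ψ hγ0.le hB2 hψlt.le
      rw [abs_le] at hd
      obtain ⟨-, hhi⟩ := hd
      set c1 : ℕ := (P.roots.filter (fun z => γ ≤ arg2pi z ∧ arg2pi z < ψ)).card with hc1
      set c2 : ℕ := (P.roots.filter (fun z => ¬(γ ≤ arg2pi z ∧ arg2pi z < ψ))).card with hc2
      have hc12 : (c1:ℝ) + c2 = n := by exact_mod_cast hpart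
      have hx := mul_le_mul_of_nonneg_left hhi hnR.le
      have h3 : (n:ℝ) * ((c1:ℝ)/n) = c1 := by field_simp
      rw [mul_sub, h3] at hx
      -- hx : c1 - n*((ψ-γ)/(2π)) ≤ n * √(t/n)
      have hψγ : (n:ℝ) * ((ψ - γ)/(2*Real.pi)) = n - n*(2*δn/(2*Real.pi)) := by
        rw [hγ]
        field_simp
        ring
      have hfin : Real.sqrt t * s ≤ r * s := mul_le_mul_of_nonneg_right hsr hspos.le
      linarith [hErr, hmain, hx, hψγ, hc12, hfin]
    · -- Case C : δn = π and sector is everything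
      push_neg at hB2
      have hδπ : δn = Real.pi := by
        rw [hγ] at hB2
        linarith
      have hfe : P.roots.filter (fun z => ∃ k : ℤ,
          φ - δn ≤ arg2pi z + 2 * Real.pi * k ∧
          arg2pi z + 2 * Real.pi * k < φ + δn) = P.roots := by
        refine Multiset.filter_eq_self.mpr fun z _ => ?_
        rw [hcond z]
        have hy0 := arg2pi_nonneg z
        have hy2 := arg2pi_lt z
        by_cases hyψ : ψ ≤ arg2pi z
        · exact Or.inl ⟨hyψ, by linarith⟩
        · push_neg at hyψ
          refine Or.inr ?_
          rw [hδπ]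
          linarith
      rw [hfe, hcard]
      -- from δn = π : a * r = s
      have har : a * r = s := by
        have h1 : Real.pi * a / s * r = Real.pi := by rw [← hδn, hδπ]
        have h2 : Real.pi * (a * r) = Real.pi * s := by
          have h3 := congrArg (· * s) h1
          field_simp at h3
          rw [h3]
        exact mul_left_cancel₀ hπ.ne' h2
      have h4 : a * r * s = s * s := by rw [har]
      linarith [h4, hss, mul_pos hspos hrpos]
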